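/- arXiv:2412.05064 — 4 statements merged into one kernel-verified Lean document; each statement's English description precedes it below -/
import Mathlib

section
/- For $0 \leq s \leq t$ real, define $g(s,t) = s^{3/2} + t^{3/2} - \frac{1}{2}(t-s)^{3/2} - \frac{1}{2}(t+s)^{3/2}$. Then $g(s,t) \geq 0$ for all $0 \leq s \leq t$, and $g$ is a valid covariance function in the sense that for any $0 \leq t_1 < \dots < t_m$ and real constants $c_1, \dots, c_m$, $\sum_{i,j} c_i c_j g(\min(t_i,t_j), \max(t_i,t_j)) \geq 0$. -/
open Real Filter MeasureTheory Set

/-- The covariance function of the Gaussian limit process in the `d = 3` case. -/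
noncomputable def gCov (s t : ℝ) : ℝ :=
  s ^ ((3:ℝ)/2) + t ^ ((3:ℝ)/2) - (1/2) * (t - s) ^ ((3:ℝ)/2) - (1/2) * (t + s) ^ ((3:ℝ)/2)

noncomputable def phiK (a : ℝ) (x : ℝ) : ℝ := (1 - Real.cos (a * x)) * x ^ (-5/2 : ℝ)

noncomputable def I0 : ℝ := ∫ x in Set.Ioi (0:ℝ), phiK 1 x

lemma phiK_meas (a : ℝ) : Measurable (phiK a) := by
  unfold phiK
  fun_prop

lemma phiK_nonneg (a : ℝ) {x : ℝ} (hx : 0 ≤ x) : 0 ≤ phiK a x :=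
  mul_nonneg (by nlinarith [Real.cos_le_one (a * x)]) (Real.rpow_nonneg hx _)

lemma phiK_one_int : IntegrableOn (phiK 1) (Ioi 0) := by
  have h01 : IntegrableOn (phiK 1) (Ioc 0 1) := by
    rw [integrableOn_Ioc_iff_integrableOn_Ioo]
    have hg : IntegrableOn (fun x : ℝ => (1/2) * x ^ (-1/2 : ℝ)) (Ioo 0 1) :=
      ((intervalIntegral.integrableOn_Ioo_rpow_iff one_pos).mpr (by norm_num)).const_mul _
    refine Integrable.mono' hg ((phiK_meas 1).aestronglyMeasurable) ?_
    filter_upwards [ae_restrict_mem measurableSet_Ioo] with x hx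
    have hx0 : (0:ℝ) < x := hx.1
    have hcos : 1 - Real.cos (1 * x) ≤ x ^ 2 / 2 := by
      have := Real.one_sub_sq_div_two_le_cos (x := x)
      rw [one_mul]; linarith
    have hrw : x ^ (2:ℕ) * x ^ (-5/2 : ℝ) = x ^ (-1/2 : ℝ) := by
      rw [← Real.rpow_natCast x 2, ← Real.rpow_add hx0]; norm_num
    rw [Real.norm_eq_abs, abs_of_nonneg (phiK_nonneg 1 hx0.le)]
    unfold phiK
    calc (1 - Real.cos (1 * x)) * x ^ (-5/2 : ℝ)
        ≤ (x ^ 2 / 2) * x ^ (-5/2 : ℝ) :=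
          mul_le_mul_of_nonneg_right hcos (Real.rpow_nonneg hx0.le _)
      _ = (1/2) * x ^ (-1/2 : ℝ) := by rw [← hrw]; ring
  have h1i : IntegrableOn (phiK 1) (Ioi 1) := by
    have hg : IntegrableOn (fun x : ℝ => 2 * x ^ (-5/2 : ℝ)) (Ioi 1) :=
      (integrableOn_Ioi_rpow_of_lt (by norm_num) one_pos).const_mul _
    refine Integrable.mono' hg ((phiK_meas 1).aestronglyMeasurable) ?_
    filter_upwards [ae_restrict_mem measurableSet_Ioi] with x hx
    have hx0 : (0:ℝ) < x := lt_trans one_pos hx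
    rw [Real.norm_eq_abs, abs_of_nonneg (phiK_nonneg 1 hx0.le)]
    unfold phiK
    have : 1 - Real.cos (1 * x) ≤ 2 := by nlinarith [Real.neg_one_le_cos (1 * x)]
    exact mul_le_mul_of_nonneg_right this (Real.rpow_nonneg hx0.le _)
  rw [← Set.Ioc_union_Ioi_eq_Ioi (zero_le_one : (0:ℝ) ≤ 1)]
  exact h01.union h1i

lemma phiK_abs (a : ℝ) : phiK a = phiK |a| := by
  funext x
  rcases abs_cases a with ⟨h, _⟩ | ⟨h, _⟩
  · rw [h]
  · unfold phiK; rw [h, neg_mul, Real.cos_neg]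

lemma phiK_int (a : ℝ) : IntegrableOn (phiK a) (Ioi 0) ∧
    ∫ x in Ioi 0, phiK a x = |a| ^ ((3:ℝ)/2) * I0 := by
  suffices h : ∀ b : ℝ, 0 ≤ b → IntegrableOn (phiK b) (Ioi 0) ∧
      ∫ x in Ioi 0, phiK b x = b ^ ((3:ℝ)/2) * I0 by
    rw [phiK_abs a]; exact h |a| (abs_nonneg a)
  intro b hb
  rcases eq_or_lt_of_le hb with hb0 | hb0
  · have hz : phiK b = fun _ => (0:ℝ) := by
      funext x; unfold phiK; rw [← hb0, zero_mul, Real.cos_zero]; ring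
    rw [hz, ← hb0]
    constructor
    · exact integrableOn_zero
    · rw [Real.zero_rpow (by norm_num)]; simp
  · have hpt : ∀ x ∈ Ioi (0:ℝ), phiK b x = b ^ ((5:ℝ)/2) * phiK 1 (b * x) := by
      intro x hx
      have hx0 : (0:ℝ) < x := hx
      unfold phiK
      rw [one_mul, Real.mul_rpow hb0.le hx0.le]
      have : b ^ ((5:ℝ)/2) * b ^ (-5/2 : ℝ) = 1 := by
        rw [← Real.rpow_add hb0]; norm_num
      calc (1 - Real.cos (b * x)) * x ^ (-5/2:ℝ)
          = (b ^ ((5:ℝ)/2) * b ^ (-5/2 : ℝ)) * ((1 - Real.cos (b * x)) * x ^ (-5/2:ℝ)) := by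
            rw [this, one_mul]
        _ = b ^ ((5:ℝ)/2) * ((1 - Real.cos (b * x)) * (b ^ (-5/2:ℝ) * x ^ (-5/2:ℝ))) := by ring
    have hcomp : IntegrableOn (fun x => phiK 1 (b * x)) (Ioi 0) := by
      rw [integrableOn_Ioi_comp_mul_left_iff (phiK 1) 0 hb0, mul_zero]
      exact phiK_one_int
    constructor
    · exact IntegrableOn.congr_fun (hcomp.const_mul (b ^ ((5:ℝ)/2)))
        (fun x hx => (hpt x hx).symm) measurableSet_Ioi
    · rw [setIntegral_congr_fun measurableSet_Ioi hpt, integral_const_mul,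
        integral_comp_mul_left_Ioi (phiK 1) 0 hb0, mul_zero]
      have hb' : b ^ ((5:ℝ)/2) * b⁻¹ = b ^ ((3:ℝ)/2) := by
        rw [← Real.rpow_neg_one b, ← Real.rpow_add hb0]; norm_num
      rw [smul_eq_mul, ← mul_assoc, hb']
      rfl

lemma I0_pos : 0 < I0 := by
  have hsub : Ioc (π/2) π ⊆ Ioi (0:ℝ) := fun x hx =>
    lt_trans (by positivity) hx.1
  have hlow : (π/2) * π ^ (-5/2 : ℝ) ≤ ∫ x in Ioc (π/2) π, phiK 1 x := by
    have hconst : ∫ _x in Ioc (π/2) π, (π ^ (-5/2 : ℝ)) = (π/2) * π ^ (-5/2 : ℝ) := by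
      rw [setIntegral_const, measureReal_def, Real.volume_Ioc, smul_eq_mul]
      rw [ENNReal.toReal_ofReal (by linarith [Real.pi_pos])]
      ring_nf
    rw [← hconst]
    refine setIntegral_mono_on ((integrableOn_const_iff).mpr ?_)
      (phiK_one_int.mono_set hsub) measurableSet_Ioc ?_
    · right; rw [Real.volume_Ioc]; exact ENNReal.ofReal_lt_top
    · intro x hx
      have hx0 : (0:ℝ) < x := hsub hx
      have hcos : Real.cos x ≤ 0 :=
        Real.cos_nonpos_of_pi_div_two_le_of_le hx.1.le (by linarith [hx.2, Real.pi_pos])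
      have h1 : (1:ℝ) ≤ 1 - Real.cos (1 * x) := by rw [one_mul]; linarith
      have h2 : π ^ (-5/2 : ℝ) ≤ x ^ (-5/2 : ℝ) :=
        Real.rpow_le_rpow_of_nonpos hx0 hx.2 (by norm_num)
      calc π ^ (-5/2 : ℝ) = 1 * π ^ (-5/2 : ℝ) := (one_mul _).symm
        _ ≤ (1 - Real.cos (1 * x)) * x ^ (-5/2 : ℝ) :=
            mul_le_mul h1 h2 (Real.rpow_nonneg Real.pi_pos.le _) (by linarith)
  have hmono : ∫ x in Ioc (π/2) π, phiK 1 x ≤ I0 := by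
    refine setIntegral_mono_set phiK_one_int ?_ (HasSubset.Subset.eventuallyLE hsub)
    filter_upwards [ae_restrict_mem measurableSet_Ioi] with x hx
    exact phiK_nonneg 1 (le_of_lt hx)
  have : (0:ℝ) < (π/2) * π ^ (-5/2 : ℝ) := by positivity
  linarith

lemma prod_int (s t : ℝ) (hs : 0 ≤ s) (hst : s ≤ t) :
    IntegrableOn (fun x => (1 - Real.cos (s*x)) * (1 - Real.cos (t*x)) * x ^ (-5/2:ℝ)) (Ioi 0) ∧
    ∫ x in Ioi 0, (1 - Real.cos (s*x)) * (1 - Real.cos (t*x)) * x ^ (-5/2:ℝ)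
      = I0 * gCov s t := by
  have ht : 0 ≤ t := hs.trans hst
  have hpt : ∀ x : ℝ, (1 - Real.cos (s*x)) * (1 - Real.cos (t*x)) * x ^ (-5/2:ℝ)
      = phiK s x + phiK t x - (1/2) * phiK (t-s) x - (1/2) * phiK (t+s) x := by
    intro x
    have hcos : Real.cos ((t-s)*x) + Real.cos ((t+s)*x)
        = 2 * (Real.cos (t*x) * Real.cos (s*x)) := by
      rw [sub_mul, add_mul, Real.cos_sub, Real.cos_add]; ring
    unfold phiK
    linear_combination (-(x ^ (-5/2:ℝ)) / 2) * hcos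
  have hA : Integrable (fun x => phiK s x) (volume.restrict (Ioi 0)) := (phiK_int s).1
  have hB : Integrable (fun x => phiK t x) (volume.restrict (Ioi 0)) := (phiK_int t).1
  have hC : Integrable (fun x => (1/2 : ℝ) * phiK (t-s) x) (volume.restrict (Ioi 0)) :=
    (phiK_int (t-s)).1.const_mul _
  have hD : Integrable (fun x => (1/2 : ℝ) * phiK (t+s) x) (volume.restrict (Ioi 0)) :=
    (phiK_int (t+s)).1.const_mul _
  have hAB : Integrable (fun x => phiK s x + phiK t x) (volume.restrict (Ioi 0)) := hA.add hB
  have hABC : Integrable (fun x => phiK s x + phiK t x - (1/2 : ℝ) * phiK (t-s) x)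
      (volume.restrict (Ioi 0)) := hAB.sub hC
  have hint : IntegrableOn
      (fun x => phiK s x + phiK t x - (1/2) * phiK (t-s) x - (1/2) * phiK (t+s) x) (Ioi 0) :=
    hABC.sub hD
  constructor
  · exact hint.congr_fun (fun x _ => (hpt x).symm) measurableSet_Ioi
  · rw [setIntegral_congr_fun measurableSet_Ioi (fun x _ => hpt x)]
    rw [integral_sub hABC hD,
      integral_sub hAB hC,
      integral_add hA hB, integral_const_mul, integral_const_mul,
      (phiK_int s).2, (phiK_int t).2, (phiK_int (t-s)).2, (phiK_int (t+s)).2,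
      abs_of_nonneg hs, abs_of_nonneg ht, abs_of_nonneg (sub_nonneg.mpr hst),
      abs_of_nonneg (by linarith : (0:ℝ) ≤ t + s)]
    unfold gCov; ring

theorem gCov_nonneg_and_posSemidef :
    (∀ s t : ℝ, 0 ≤ s → s ≤ t → 0 ≤ gCov s t) ∧
    (∀ (m : ℕ) (tvec c : Fin m → ℝ), (∀ i, 0 ≤ tvec i) → StrictMono tvec →
      0 ≤ ∑ i : Fin m, ∑ j : Fin m,
        c i * c j * gCov (min (tvec i) (tvec j)) (max (tvec i) (tvec j))) := by
  constructor
  · intro s t hs hst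
    have h := prod_int s t hs hst
    have hnn : 0 ≤ ∫ x in Ioi 0, (1 - Real.cos (s*x)) * (1 - Real.cos (t*x)) * x ^ (-5/2:ℝ) := by
      refine setIntegral_nonneg measurableSet_Ioi (fun x hx => ?_)
      have hx0 : (0:ℝ) < x := hx
      refine mul_nonneg (mul_nonneg ?_ ?_) (Real.rpow_nonneg hx0.le _) <;>
        nlinarith [Real.cos_le_one (s*x), Real.cos_le_one (t*x)]
    rw [h.2] at hnn
    nlinarith [I0_pos]
  · intro m tvec c htv _
    set F : Fin m → Fin m → ℝ → ℝ := fun i j x =>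
      c i * c j * ((1 - Real.cos (tvec i * x)) * (1 - Real.cos (tvec j * x)) * x ^ (-5/2:ℝ))
      with hF
    have hsym : ∀ i j x, (1 - Real.cos (tvec i * x)) * (1 - Real.cos (tvec j * x))
        = (1 - Real.cos (min (tvec i) (tvec j) * x)) * (1 - Real.cos (max (tvec i) (tvec j) * x)) := by
      intro i j x
      rcases le_total (tvec i) (tvec j) with h | h
      · rw [min_eq_left h, max_eq_right h]
      · rw [min_eq_right h, max_eq_left h]; ring
    have hkey : ∀ i j : Fin m, Integrable (F i j) (volume.restrict (Ioi 0)) ∧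
        ∫ x in Ioi 0, F i j x
          = c i * c j * (I0 * gCov (min (tvec i) (tvec j)) (max (tvec i) (tvec j))) := by
      intro i j
      have hmin : 0 ≤ min (tvec i) (tvec j) := le_min (htv i) (htv j)
      have P := prod_int (min (tvec i) (tvec j)) (max (tvec i) (tvec j)) hmin min_le_max
      have heq : ∀ x ∈ Ioi (0:ℝ), F i j x = c i * c j *
          ((1 - Real.cos (min (tvec i) (tvec j) * x)) *
            (1 - Real.cos (max (tvec i) (tvec j) * x)) * x ^ (-5/2:ℝ)) := by
        intro x _
        rw [hF]; dsimp only; rw [hsym i j x]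
      constructor
      · exact IntegrableOn.congr_fun (P.1.const_mul (c i * c j))
          (fun x hx => (heq x hx).symm) measurableSet_Ioi
      · rw [setIntegral_congr_fun measurableSet_Ioi heq, integral_const_mul, P.2]
    have hIS : I0 * (∑ i : Fin m, ∑ j : Fin m,
        c i * c j * gCov (min (tvec i) (tvec j)) (max (tvec i) (tvec j)))
        = ∫ x in Ioi 0, (∑ i : Fin m, c i * (1 - Real.cos (tvec i * x)))^2 * x ^ (-5/2:ℝ) := by
      have step1 : I0 * (∑ i : Fin m, ∑ j : Fin m,
          c i * c j * gCov (min (tvec i) (tvec j)) (max (tvec i) (tvec j)))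
          = ∑ i : Fin m, ∑ j : Fin m, ∫ x in Ioi 0, F i j x := by
        rw [Finset.mul_sum]
        refine Finset.sum_congr rfl fun i _ => ?_
        rw [Finset.mul_sum]
        refine Finset.sum_congr rfl fun j _ => ?_
        rw [(hkey i j).2]; ring
      have step2 : ∑ i : Fin m, ∑ j : Fin m, ∫ x in Ioi 0, F i j x
          = ∫ x in Ioi 0, ∑ i : Fin m, ∑ j : Fin m, F i j x := by
        calc ∑ i : Fin m, ∑ j : Fin m, ∫ x in Ioi 0, F i j x
            = ∑ i : Fin m, ∫ x in Ioi 0, ∑ j : Fin m, F i j x :=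
              Finset.sum_congr rfl fun i _ =>
                (integral_finset_sum _ (fun j _ => (hkey i j).1)).symm
          _ = ∫ x in Ioi 0, ∑ i : Fin m, ∑ j : Fin m, F i j x :=
              (integral_finset_sum _ (fun i _ =>
                integrable_finset_sum _ (fun j _ => (hkey i j).1))).symm
      have step3 : ∀ x : ℝ, ∑ i : Fin m, ∑ j : Fin m, F i j x
          = (∑ i : Fin m, c i * (1 - Real.cos (tvec i * x)))^2 * x ^ (-5/2:ℝ) := by
        intro x
        rw [sq, Finset.sum_mul_sum, Finset.sum_mul]
        refine Finset.sum_congr rfl fun i _ => ?_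
        rw [Finset.sum_mul]
        refine Finset.sum_congr rfl fun j _ => ?_
        rw [hF]; dsimp only; ring
      rw [step1, step2]
      exact setIntegral_congr_fun measurableSet_Ioi (fun x _ => step3 x)
    have hnn : 0 ≤ ∫ x in Ioi 0,
        (∑ i : Fin m, c i * (1 - Real.cos (tvec i * x)))^2 * x ^ (-5/2:ℝ) := by
      refine setIntegral_nonneg measurableSet_Ioi (fun x hx => ?_)
      exact mul_nonneg (sq_nonneg _) (Real.rpow_nonneg (le_of_lt hx) _)
    rw [← hIS] at hnn
    nlinarith [I0_pos]
end

section
/- Suppose $q : (0,\infty) \to [0,\infty)$ is measurable with $\int_0^\infty q(r)\,dr < \infty$ and $\lim_{r\to\infty} r^{3/2} q(r) = (4\pi)^{-3/2}$. Then for any fixed $0 \leq s < t$, $\lim_{N\to\infty} \frac{1}{\sqrt{N}} \int_0^s \int_0^{(t-\theta)N} \int_0^{(s-\theta)N} q(r_1+r_2)\,dr_1\,dr_2\,d\theta = \frac{1}{3\pi^{3/2}}\left(s^{3/2} + t^{3/2} - \frac{1}{2}(t-s)^{3/2} - \frac{1}{2}(t+s)^{3/2}\right)$. -/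
open Real Filter MeasureTheory intervalIntegral


noncomputable def Ti (f : ℝ → ℝ) (x : ℝ) : ℝ :=
  (∫ r in Set.Ioi (0:ℝ), f r) - ∫ u in (0:ℝ)..x, f u

noncomputable def Gi (f : ℝ → ℝ) (x : ℝ) : ℝ := ∫ u in (0:ℝ)..x, Ti f u

lemma Ti_cont {f : ℝ → ℝ} (hf : Integrable f) : Continuous (Ti f) :=
  continuous_const.sub (hf.continuous_primitive 0)

lemma Gi_cont {f : ℝ → ℝ} (hf : Integrable f) : Continuous (Gi f) :=
  continuous_primitive (fun _ _ => ((Ti_cont hf).intervalIntegrable _ _)) 0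

lemma Ti_eq {f : ℝ → ℝ} (hf : Integrable f) {x : ℝ} (hx : 0 ≤ x) :
    Ti f x = ∫ r in Set.Ioi x, f r := by
  have h : (∫ r in Set.Ioi (0:ℝ), f r)
      = (∫ r in Set.Ioc 0 x, f r) + ∫ r in Set.Ioi x, f r := by
    rw [← MeasureTheory.setIntegral_union (Set.Ioc_disjoint_Ioi le_rfl) measurableSet_Ioi
      hf.integrableOn hf.integrableOn, Set.Ioc_union_Ioi_eq_Ioi hx]
  rw [Ti, h, intervalIntegral.integral_of_le hx]
  ring

lemma double_int {f : ℝ → ℝ} (hf : Integrable f) (a b : ℝ) :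
    (∫ r1 in (0:ℝ)..a, ∫ r2 in (0:ℝ)..b, f (r1+r2)) = Gi f a + Gi f b - Gi f (a+b) := by
  have hTc : Continuous (Ti f) := Ti_cont hf
  have h1 : ∀ r1 : ℝ, (∫ r2 in (0:ℝ)..b, f (r1+r2)) = Ti f r1 - Ti f (r1+b) := by
    intro r1
    have h2 : (∫ r2 in (0:ℝ)..b, f (r1+r2)) = ∫ x in r1..(r1+b), f x := by
      simpa using intervalIntegral.integral_comp_add_left f r1 (a := 0) (b := b)
    rw [h2, Ti, Ti, ← intervalIntegral.integral_add_adjacent_intervals (a := (0:ℝ)) (b := r1)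
      (c := r1 + b) hf.intervalIntegrable hf.intervalIntegrable]
    ring
  rw [intervalIntegral.integral_congr (g := fun r1 => Ti f r1 - Ti f (r1+b)) (fun x _ => h1 x)]
  have hc2 : Continuous fun x : ℝ => Ti f (x + b) := hTc.comp (by continuity)
  rw [intervalIntegral.integral_sub (hTc.intervalIntegrable _ _) (hc2.intervalIntegrable _ _)]
  have h3 : (∫ r1 in (0:ℝ)..a, Ti f (r1 + b)) = Gi f (a+b) - Gi f b := by
    rw [intervalIntegral.integral_comp_add_right (fun x => Ti f x) b]
    rw [Gi, Gi, ← intervalIntegral.integral_add_adjacent_intervals (a := (0:ℝ)) (b := b)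
      (c := a + b) (hTc.intervalIntegrable _ _) (hTc.intervalIntegrable _ _)]
    simp [zero_add, add_comm]
  rw [h3]
  simp only [Gi]
  ring

lemma tail_est {f : ℝ → ℝ} (hf : Integrable f) {c : ℝ}
    (hlim : Tendsto (fun r => r ^ ((3:ℝ)/2) * f r) atTop (nhds c))
    {ε : ℝ} (hε : 0 < ε) :
    ∃ R ≥ (1:ℝ), ∀ u ≥ R, |Ti f u - 2*c/Real.sqrt u| ≤ ε/Real.sqrt u := by
  have h2 : ∀ᶠ r in atTop, |r ^ ((3:ℝ)/2) * f r - c| ≤ ε/2 := by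
    have := Metric.tendsto_nhds.mp hlim (ε/2) (by positivity)
    filter_upwards [this] with r hr using le_of_lt (by simpa [Real.dist_eq] using hr)
  obtain ⟨R0, hR0⟩ := h2.exists_forall_of_atTop
  refine ⟨max R0 1, le_max_right _ _, fun u hu => ?_⟩
  have hu1 : (1:ℝ) ≤ u := le_trans (le_max_right R0 1) hu
  have hu0 : (0:ℝ) < u := lt_of_lt_of_le one_pos hu1
  have hsu : (0:ℝ) < Real.sqrt u := Real.sqrt_pos.mpr hu0
  have hpt : ∀ r ∈ Set.Ioi u, (c - ε/2) * r ^ ((-3:ℝ)/2) ≤ f r ∧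
      f r ≤ (c + ε/2) * r ^ ((-3:ℝ)/2) := by
    intro r hr
    have hru : u < r := hr
    have hr0 : (0:ℝ) < r := lt_trans hu0 hru
    have h32 : (0:ℝ) < r ^ ((3:ℝ)/2) := Real.rpow_pos_of_pos hr0 _
    have hb := abs_le.mp (hR0 r (le_trans (le_trans (le_max_left R0 1) hu) hru.le))
    have hinv : r ^ ((-3:ℝ)/2) = (r ^ ((3:ℝ)/2))⁻¹ := by
      rw [show ((-3:ℝ)/2) = -((3:ℝ)/2) by norm_num, Real.rpow_neg hr0.le]
    constructor
    · rw [hinv, ← div_eq_mul_inv, div_le_iff₀ h32]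
      nlinarith [hb.1]
    · rw [hinv, ← div_eq_mul_inv, le_div_iff₀ h32]
      nlinarith [hb.2]
  have hint_pow : IntegrableOn (fun r : ℝ => r ^ ((-3:ℝ)/2)) (Set.Ioi u) :=
    integrableOn_Ioi_rpow_of_lt (by norm_num) hu0
  have hval : (∫ r in Set.Ioi u, r ^ ((-3:ℝ)/2)) = 2 * (Real.sqrt u)⁻¹ := by
    rw [integral_Ioi_rpow_of_lt (by norm_num) hu0]
    rw [show ((-3:ℝ)/2 + 1) = -(1/2) by norm_num, Real.rpow_neg hu0.le, ← Real.sqrt_eq_rpow]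
    field_simp
  have hup : Ti f u ≤ (c + ε/2) * (2 * (Real.sqrt u)⁻¹) := by
    rw [Ti_eq hf hu0.le]
    calc (∫ r in Set.Ioi u, f r) ≤ ∫ r in Set.Ioi u, (c + ε/2) * r ^ ((-3:ℝ)/2) :=
          setIntegral_mono_on hf.integrableOn (hint_pow.const_mul _) measurableSet_Ioi
            (fun r hr => (hpt r hr).2)
      _ = (c + ε/2) * (2 * (Real.sqrt u)⁻¹) := by rw [MeasureTheory.integral_const_mul, hval]
  have hlo : (c - ε/2) * (2 * (Real.sqrt u)⁻¹) ≤ Ti f u := by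
    rw [Ti_eq hf hu0.le]
    calc (c - ε/2) * (2 * (Real.sqrt u)⁻¹)
        = ∫ r in Set.Ioi u, (c - ε/2) * r ^ ((-3:ℝ)/2) := by
          rw [MeasureTheory.integral_const_mul, hval]
      _ ≤ ∫ r in Set.Ioi u, f r :=
          setIntegral_mono_on (hint_pow.const_mul _) hf.integrableOn measurableSet_Ioi
            (fun r hr => (hpt r hr).1)
  rw [div_eq_mul_inv, div_eq_mul_inv, mul_comm (2:ℝ) c, mul_assoc]
  have hv : (0:ℝ) ≤ (Real.sqrt u)⁻¹ := by positivity
  rw [abs_le]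
  constructor <;> nlinarith

lemma Ti_nonneg {f : ℝ → ℝ} (hf : Integrable f) (hf0 : ∀ r, 0 ≤ f r) {x : ℝ} (hx : 0 ≤ x) :
    0 ≤ Ti f x := by
  rw [Ti_eq hf hx]
  exact setIntegral_nonneg measurableSet_Ioi (fun r _ => hf0 r)

lemma Gi_interval {f : ℝ → ℝ} (hf : Integrable f) (x y : ℝ) :
    (∫ u in x..y, Ti f u) = Gi f y - Gi f x := by
  have hTc := Ti_cont hf
  rw [Gi, Gi, ← intervalIntegral.integral_add_adjacent_intervals (a := (0:ℝ)) (b := x)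
    (c := y) (hTc.intervalIntegrable _ _) (hTc.intervalIntegrable _ _)]
  ring

lemma Gi_mono {f : ℝ → ℝ} (hf : Integrable f) (hf0 : ∀ r, 0 ≤ f r) {x y : ℝ}
    (hx : 0 ≤ x) (hxy : x ≤ y) : Gi f x ≤ Gi f y := by
  have h : 0 ≤ ∫ u in x..y, Ti f u :=
    intervalIntegral.integral_nonneg hxy
      (fun u hu => Ti_nonneg hf hf0 (le_trans hx hu.1))
  rw [Gi_interval hf] at h
  linarith

lemma Gi_nonneg {f : ℝ → ℝ} (hf : Integrable f) (hf0 : ∀ r, 0 ≤ f r) {x : ℝ} (hx : 0 ≤ x) :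
    0 ≤ Gi f x := by
  have := Gi_mono hf hf0 (le_refl 0) hx
  simpa [Gi] using this

lemma inv_sqrt_integral {c R x : ℝ} (hR : 0 < R) (hRx : R ≤ x) :
    (∫ u in R..x, 2*c/Real.sqrt u) = 4*c*Real.sqrt x - 4*c*Real.sqrt R := by
  have hcong : Set.EqOn (fun u : ℝ => 2*c/Real.sqrt u)
      (fun u : ℝ => 2*c*u ^ (-(1:ℝ)/2)) (Set.uIcc R x) := by
    intro u hu
    have hu0 : 0 < u := lt_of_lt_of_le hR (by
      rcases Set.mem_uIcc.mp hu with h | h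
      · exact h.1
      · exact le_trans hRx h.1)
    simp only
    rw [show (-(1:ℝ)/2) = -(1/2) by norm_num, Real.rpow_neg hu0.le, ← Real.sqrt_eq_rpow,
      div_eq_mul_inv]
  rw [intervalIntegral.integral_congr hcong, intervalIntegral.integral_const_mul,
    integral_rpow (Or.inl (by norm_num))]
  rw [show (-(1:ℝ)/2 + 1) = 1/2 by norm_num, ← Real.sqrt_eq_rpow, ← Real.sqrt_eq_rpow]
  ring

lemma H_bound {f : ℝ → ℝ} (hf : Integrable f) (hf0 : ∀ r, 0 ≤ f r) {c : ℝ} (hc : 0 ≤ c)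
    (hlim : Tendsto (fun r => r ^ ((3:ℝ)/2) * f r) atTop (nhds c))
    {ε : ℝ} (hε : 0 < ε) :
    ∃ C ≥ (0:ℝ), ∀ x ≥ (0:ℝ), |Gi f x - 4*c*Real.sqrt x| ≤ ε*Real.sqrt x + C := by
  obtain ⟨R, hR1, hTail⟩ := tail_est hf hlim (half_pos hε)
  have hR0 : (0:ℝ) < R := lt_of_lt_of_le one_pos hR1
  set C : ℝ := |Gi f R - 4*c*Real.sqrt R| + Gi f R + 4*c*Real.sqrt R with hC
  have hGR : 0 ≤ Gi f R := Gi_nonneg hf hf0 hR0.le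
  have hcR : 0 ≤ 4*c*Real.sqrt R := by positivity
  refine ⟨C, by positivity, fun x hx => ?_⟩
  rcases le_or_gt x R with hxR | hxR
  · have h1 : Gi f x ≤ Gi f R := Gi_mono hf hf0 hx hxR
    have h2 : 0 ≤ Gi f x := Gi_nonneg hf hf0 hx
    have h3 : 4*c*Real.sqrt x ≤ 4*c*Real.sqrt R := by
      have := Real.sqrt_le_sqrt hxR
      nlinarith [Real.sqrt_nonneg x]
    have h4 : 0 ≤ 4*c*Real.sqrt x := by positivity
    have h5 : 0 ≤ ε*Real.sqrt x := by positivity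
    rw [abs_le]
    constructor
    · have : 0 ≤ |Gi f R - 4*c*Real.sqrt R| := abs_nonneg _
      linarith
    · have : 0 ≤ |Gi f R - 4*c*Real.sqrt R| := abs_nonneg _
      linarith
  · -- x > R
    have hRx : R ≤ x := hxR.le
    have hcont : ContinuousOn (fun u : ℝ => 2*c/Real.sqrt u) (Set.uIcc R x) := by
      apply ContinuousOn.div continuousOn_const (Real.continuous_sqrt.continuousOn)
      intro u hu
      have hu0 : 0 < u := lt_of_lt_of_le hR0 (by
        rcases Set.mem_uIcc.mp hu with h | h
        · exact h.1
        · exact le_trans hRx h.1)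
      exact (Real.sqrt_pos.mpr hu0).ne'
    have hint1 : IntervalIntegrable (fun u : ℝ => 2*c/Real.sqrt u) volume R x :=
      hcont.intervalIntegrable
    have hint2 : IntervalIntegrable (fun u : ℝ => (ε/2)/Real.sqrt u) volume R x := by
      apply ContinuousOn.intervalIntegrable
      apply ContinuousOn.div continuousOn_const (Real.continuous_sqrt.continuousOn)
      intro u hu
      have hu0 : 0 < u := lt_of_lt_of_le hR0 (by
        rcases Set.mem_uIcc.mp hu with h | h
        · exact h.1
        · exact le_trans hRx h.1)
      exact (Real.sqrt_pos.mpr hu0).ne'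
    have hsplit : Gi f x - 4*c*Real.sqrt x = (Gi f R - 4*c*Real.sqrt R)
        + ∫ u in R..x, (Ti f u - 2*c/Real.sqrt u) := by
      rw [intervalIntegral.integral_sub ((Ti_cont hf).intervalIntegrable _ _) hint1,
        Gi_interval hf, inv_sqrt_integral hR0 hRx]
      ring
    have hval2 : (∫ u in R..x, (ε/2)/Real.sqrt u) = ε*Real.sqrt x - ε*Real.sqrt R := by
      have h := inv_sqrt_integral (c := ε/4) hR0 hRx
      have he : (fun u : ℝ => (ε/2)/Real.sqrt u) = fun u : ℝ => 2*(ε/4)/Real.sqrt u := by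
        funext u; ring_nf
      rw [he, h]; ring
    have hb : |∫ u in R..x, (Ti f u - 2*c/Real.sqrt u)| ≤ ε*Real.sqrt x - ε*Real.sqrt R := by
      have h := intervalIntegral.norm_integral_le_of_norm_le (μ := volume)
        (f := fun u => Ti f u - 2*c/Real.sqrt u) (g := fun u => (ε/2)/Real.sqrt u)
        (a := R) (b := x) hRx ?_ hint2
      · rw [Real.norm_eq_abs] at h
        rw [hval2] at h
        have hsx : Real.sqrt R ≤ Real.sqrt x := Real.sqrt_le_sqrt hRx
        have : |ε*Real.sqrt x - ε*Real.sqrt R| = ε*Real.sqrt x - ε*Real.sqrt R := by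
          rw [abs_of_nonneg]; nlinarith
        exact h
      · apply Filter.Eventually.of_forall
        intro u hu
        have huR : R ≤ u := by
          exact hu.1.le
        simpa [Real.norm_eq_abs] using hTail u huR
    have hsR : 0 ≤ ε*Real.sqrt R := by positivity
    have habs := abs_abs_sub_abs_le_abs_sub (Gi f x - 4*c*Real.sqrt x) 0
    rw [hsplit]
    calc |Gi f R - 4*c*Real.sqrt R + ∫ u in R..x, (Ti f u - 2*c/Real.sqrt u)|
        ≤ |Gi f R - 4*c*Real.sqrt R| + |∫ u in R..x, (Ti f u - 2*c/Real.sqrt u)| := abs_add_le _ _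
      _ ≤ |Gi f R - 4*c*Real.sqrt R| + (ε*Real.sqrt x - ε*Real.sqrt R) := by linarith
      _ ≤ ε*Real.sqrt x + C := by rw [hC]; linarith


lemma sqrt_int (a b : ℝ) :
    (∫ x in a..b, Real.sqrt x) = (b ^ ((3:ℝ)/2) - a ^ ((3:ℝ)/2)) / (3/2) := by
  simp_rw [Real.sqrt_eq_rpow]
  rw [integral_rpow (Or.inl (by norm_num))]
  norm_num

lemma four_pi_pow : 4*(4*π)^(-(3:ℝ)/2) = 1/(2*π^((3:ℝ)/2)) := by
  have hπ : (0:ℝ) < π := Real.pi_pos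
  have h1 : (4*π) ^ (-(3:ℝ)/2) = ((4*π) ^ ((3:ℝ)/2))⁻¹ := by
    rw [show (-(3:ℝ)/2) = -((3:ℝ)/2) by norm_num, Real.rpow_neg (by positivity)]
  have h2 : (4*π) ^ ((3:ℝ)/2) = 4 ^ ((3:ℝ)/2) * π ^ ((3:ℝ)/2) :=
    Real.mul_rpow (by norm_num) hπ.le
  have h3 : (4:ℝ) ^ ((3:ℝ)/2) = 8 := by
    rw [show ((3:ℝ)/2) = (1/2)*3 by norm_num, Real.rpow_mul (by norm_num),
      ← Real.sqrt_eq_rpow, show (4:ℝ) = 2^2 by norm_num, Real.sqrt_sq (by norm_num)]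
    rw [show (3:ℝ) = ((3:ℕ):ℝ) by norm_num, Real.rpow_natCast]
    norm_num
  have hp : (0:ℝ) < π ^ ((3:ℝ)/2) := Real.rpow_pos_of_pos hπ _
  rw [h1, h2, h3]
  field_simp
  ring

lemma L_integral (s t : ℝ) :
    (∫ θ in (0:ℝ)..s, 4*(4*π)^(-(3:ℝ)/2) *
        (Real.sqrt (t-θ) + Real.sqrt (s-θ) - Real.sqrt (t+s-2*θ)))
      = (1/(3*π^((3:ℝ)/2))) * (s^((3:ℝ)/2) + t^((3:ℝ)/2) - (1/2)*(t-s)^((3:ℝ)/2)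
          - (1/2)*(t+s)^((3:ℝ)/2)) := by
  have hπ : (0:ℝ) < π := Real.pi_pos
  have hp : (0:ℝ) < π ^ ((3:ℝ)/2) := Real.rpow_pos_of_pos hπ _
  have c1 : Continuous fun θ : ℝ => Real.sqrt (t-θ) := by continuity
  have c2 : Continuous fun θ : ℝ => Real.sqrt (s-θ) := by continuity
  have c3 : Continuous fun θ : ℝ => Real.sqrt (t+s-2*θ) := by continuity
  have I1 : (∫ θ in (0:ℝ)..s, Real.sqrt (t-θ))
      = (t ^ ((3:ℝ)/2) - (t-s) ^ ((3:ℝ)/2)) / (3/2) := by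
    rw [intervalIntegral.integral_comp_sub_left Real.sqrt t, sqrt_int]
    norm_num
  have I2 : (∫ θ in (0:ℝ)..s, Real.sqrt (s-θ))
      = (s ^ ((3:ℝ)/2) - (0:ℝ) ^ ((3:ℝ)/2)) / (3/2) := by
    rw [intervalIntegral.integral_comp_sub_left Real.sqrt s, sqrt_int]
    norm_num
  have I3 : (∫ θ in (0:ℝ)..s, Real.sqrt (t+s-2*θ))
      = 2⁻¹ * (((t+s) ^ ((3:ℝ)/2) - (t-s) ^ ((3:ℝ)/2)) / (3/2)) := by
    rw [intervalIntegral.integral_comp_sub_mul Real.sqrt (by norm_num : (2:ℝ) ≠ 0) (t+s),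
      sqrt_int]
    norm_num [smul_eq_mul]
    ring_nf
  rw [intervalIntegral.integral_const_mul,
    intervalIntegral.integral_sub (f := fun θ => Real.sqrt (t-θ) + Real.sqrt (s-θ))
      ((c1.add c2).intervalIntegrable _ _)
      (c3.intervalIntegrable _ _),
    intervalIntegral.integral_add (c1.intervalIntegrable _ _) (c2.intervalIntegrable _ _),
    I1, I2, I3, four_pi_pow, Real.zero_rpow (by norm_num)]
  field_simp
  ring

set_option maxHeartbeats 1000000 in
theorem limit_covariance_d3 (q : ℝ → ℝ) (hmeas : Measurable q) (hq0 : ∀ r > 0, 0 ≤ q r)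
    (hint : IntegrableOn q (Set.Ioi 0))
    (hlim : Tendsto (fun r => r ^ ((3:ℝ)/2) * q r) atTop (nhds ((4 * π) ^ (-(3:ℝ)/2))))
    (s t : ℝ) (hs : 0 ≤ s) (hst : s < t) :
    Tendsto (fun N : ℕ => (1 / Real.sqrt N) *
        ∫ θ in (0:ℝ)..s, ∫ r1 in (0:ℝ)..((t - θ) * N), ∫ r2 in (0:ℝ)..((s - θ) * N),
          q (r1 + r2)) atTop
      (nhds ((1 / (3 * π ^ ((3:ℝ)/2))) *
        (s ^ ((3:ℝ)/2) + t ^ ((3:ℝ)/2) - (1/2) * (t - s) ^ ((3:ℝ)/2)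
          - (1/2) * (t + s) ^ ((3:ℝ)/2)))) := by
  have ht0 : (0:ℝ) ≤ t := le_of_lt (lt_of_le_of_lt hs hst)
  set c : ℝ := (4 * π) ^ (-(3:ℝ)/2) with hc_def
  have hc0 : 0 < c := Real.rpow_pos_of_pos (by positivity) _
  set f : ℝ → ℝ := Set.indicator (Set.Ioi 0) q with hf_def
  have hf : Integrable f := hint.integrable_indicator measurableSet_Ioi
  have hf0 : ∀ r, 0 ≤ f r := by
    intro r
    rcases le_or_gt r 0 with h | h
    · rw [hf_def, Set.indicator_of_notMem (by simpa using h)]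
    · rw [hf_def, Set.indicator_of_mem (by simpa using h)]
      exact hq0 r h
  have hlim' : Tendsto (fun r => r ^ ((3:ℝ)/2) * f r) atTop (nhds c) := by
    apply hlim.congr'
    filter_upwards [eventually_gt_atTop (0:ℝ)] with r hr
    rw [hf_def, Set.indicator_of_mem (by simpa using hr)]
  -- the limit function of θ
  set L : ℝ → ℝ := fun θ => 4*c*(Real.sqrt (t-θ) + Real.sqrt (s-θ) - Real.sqrt (t+s-2*θ))
    with hL_def
  have hLc : Continuous L := by
    rw [hL_def]; continuity
  -- prelimit functions of θ
  set g : ℕ → ℝ → ℝ := fun N θ => (1 / Real.sqrt N) *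
      (Gi f ((t-θ)*N) + Gi f ((s-θ)*N) - Gi f ((t+s-2*θ)*N)) with hg_def
  have hGc : Continuous (Gi f) := Gi_cont hf
  have hgc : ∀ N, Continuous (g N) := by
    intro N
    apply continuous_const.mul
    apply Continuous.sub
    apply Continuous.add
    · exact hGc.comp (by continuity)
    · exact hGc.comp (by continuity)
    · exact hGc.comp (by continuity)
  -- rewrite the sequence
  have heq : ∀ N : ℕ, (1 / Real.sqrt N) *
      (∫ θ in (0:ℝ)..s, ∫ r1 in (0:ℝ)..((t - θ) * N), ∫ r2 in (0:ℝ)..((s - θ) * N),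
        q (r1 + r2)) = ∫ θ in (0:ℝ)..s, g N θ := by
    intro N
    rw [hg_def, ← intervalIntegral.integral_const_mul]
    apply intervalIntegral.integral_congr
    intro θ hθ
    rw [Set.uIcc_of_le hs] at hθ
    have ha : (0:ℝ) ≤ (t-θ)*N := by
      have h1 : θ ≤ t := le_trans hθ.2 hst.le
      exact mul_nonneg (by linarith) (Nat.cast_nonneg N)
    have hb : (0:ℝ) ≤ (s-θ)*N := by
      have h1 : θ ≤ s := hθ.2
      exact mul_nonneg (by linarith) (Nat.cast_nonneg N)
    simp only
    congr 1
    have hq_congr : (∫ r1 in (0:ℝ)..((t - θ) * N), ∫ r2 in (0:ℝ)..((s - θ) * N), q (r1 + r2))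
        = ∫ r1 in (0:ℝ)..((t - θ) * N), ∫ r2 in (0:ℝ)..((s - θ) * N), f (r1 + r2) := by
      rw [intervalIntegral.integral_of_le ha, intervalIntegral.integral_of_le ha]
      apply setIntegral_congr_fun measurableSet_Ioc
      intro r1 hr1
      simp only
      rw [intervalIntegral.integral_of_le hb, intervalIntegral.integral_of_le hb]
      apply setIntegral_congr_fun measurableSet_Ioc
      intro r2 hr2
      simp only
      have h12 : (0:ℝ) < r1 + r2 := add_pos hr1.1 hr2.1
      rw [hf_def, Set.indicator_of_mem (by simpa using h12)]
    rw [hq_congr, double_int hf]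
    have : (t-θ)*N + (s-θ)*N = (t+s-2*θ)*N := by ring
    rw [this]
  -- the main convergence
  have hmain : Tendsto (fun N : ℕ => ∫ θ in (0:ℝ)..s, g N θ) atTop
      (nhds (∫ θ in (0:ℝ)..s, L θ)) := by
    rw [Metric.tendsto_nhds]
    intro ε hε
    set M : ℝ := 3*Real.sqrt (t+s) + 1 with hM_def
    have hM0 : 0 < M := by positivity
    set ε₁ : ℝ := ε/(2*M*(s+1)) with hε₁_def
    have hε₁0 : 0 < ε₁ := by positivity
    obtain ⟨C, hC0, hCb⟩ := H_bound hf hf0 hc0.le hlim' hε₁0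
    set K : ℝ := 6*C*(s+1)/ε + 1 with hK_def
    have hK1 : (1:ℝ) ≤ K := by
      rw [hK_def]
      have : (0:ℝ) ≤ 6*C*(s+1)/ε := by positivity
      linarith
    have hsqrtN : Tendsto (fun N : ℕ => Real.sqrt N) atTop atTop := by
      have h := (tendsto_rpow_atTop (y := 1/2) (by norm_num)).comp
        (tendsto_natCast_atTop_atTop (R := ℝ))
      exact h.congr (fun N => (Real.sqrt_eq_rpow _).symm)
    filter_upwards [hsqrtN.eventually_ge_atTop K] with N hN
    have hsN0 : (0:ℝ) < Real.sqrt N := lt_of_lt_of_le (lt_of_lt_of_le one_pos hK1) hN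
    -- pointwise bound on Ioc 0 s
    have hpt : ∀ θ ∈ Set.uIoc (0:ℝ) s, ‖g N θ - L θ‖ ≤ ε/(s+1) := by
      intro θ hθ
      rw [Set.uIoc_of_le hs] at hθ
      have hθ0 : 0 ≤ θ := hθ.1.le
      have hθs : θ ≤ s := hθ.2
      have hts : 0 ≤ t - θ := by linarith
      have hss : 0 ≤ s - θ := by linarith
      have htss : 0 ≤ t + s - 2*θ := by linarith
      have ha : (0:ℝ) ≤ (t-θ)*N := by positivity
      have hb : (0:ℝ) ≤ (s-θ)*N := by positivity
      have hab : (0:ℝ) ≤ (t+s-2*θ)*N := by positivity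
      have e1 := hCb _ ha
      have e2 := hCb _ hb
      have e3 := hCb _ hab
      have s1 : Real.sqrt ((t-θ)*N) = Real.sqrt (t-θ) * Real.sqrt N := Real.sqrt_mul hts N
      have s2 : Real.sqrt ((s-θ)*N) = Real.sqrt (s-θ) * Real.sqrt N := Real.sqrt_mul hss N
      have s3 : Real.sqrt ((t+s-2*θ)*N) = Real.sqrt (t+s-2*θ) * Real.sqrt N :=
        Real.sqrt_mul htss N
      have hLθ : L θ = (1 / Real.sqrt N) * (4*c*Real.sqrt ((t-θ)*N)
          + 4*c*Real.sqrt ((s-θ)*N) - 4*c*Real.sqrt ((t+s-2*θ)*N)) := by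
        rw [hL_def, s1, s2, s3]
        field_simp
      have hdiff : g N θ - L θ = (1 / Real.sqrt N) *
          ((Gi f ((t-θ)*N) - 4*c*Real.sqrt ((t-θ)*N))
            + (Gi f ((s-θ)*N) - 4*c*Real.sqrt ((s-θ)*N))
            - (Gi f ((t+s-2*θ)*N) - 4*c*Real.sqrt ((t+s-2*θ)*N))) := by
        rw [hg_def, hLθ]
        ring
      rw [Real.norm_eq_abs, hdiff, abs_mul, abs_of_nonneg (by positivity : (0:ℝ) ≤ 1/Real.sqrt N)]
      have habs : |(Gi f ((t-θ)*N) - 4*c*Real.sqrt ((t-θ)*N))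
            + (Gi f ((s-θ)*N) - 4*c*Real.sqrt ((s-θ)*N))
            - (Gi f ((t+s-2*θ)*N) - 4*c*Real.sqrt ((t+s-2*θ)*N))|
          ≤ ε₁*(Real.sqrt ((t-θ)*N) + Real.sqrt ((s-θ)*N) + Real.sqrt ((t+s-2*θ)*N)) + 3*C := by
        have := abs_sub (Gi f ((t-θ)*N) - 4*c*Real.sqrt ((t-θ)*N)
            + (Gi f ((s-θ)*N) - 4*c*Real.sqrt ((s-θ)*N)))
          (Gi f ((t+s-2*θ)*N) - 4*c*Real.sqrt ((t+s-2*θ)*N))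
        have h12 := abs_add_le (Gi f ((t-θ)*N) - 4*c*Real.sqrt ((t-θ)*N))
          (Gi f ((s-θ)*N) - 4*c*Real.sqrt ((s-θ)*N))
        nlinarith [e1, e2, e3]
      have hsqb : Real.sqrt (t-θ) ≤ Real.sqrt (t+s) := Real.sqrt_le_sqrt (by linarith)
      have hsqb2 : Real.sqrt (s-θ) ≤ Real.sqrt (t+s) := Real.sqrt_le_sqrt (by linarith)
      have hsqb3 : Real.sqrt (t+s-2*θ) ≤ Real.sqrt (t+s) := Real.sqrt_le_sqrt (by linarith)
      calc (1/Real.sqrt N) * |(Gi f ((t-θ)*N) - 4*c*Real.sqrt ((t-θ)*N))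
            + (Gi f ((s-θ)*N) - 4*c*Real.sqrt ((s-θ)*N))
            - (Gi f ((t+s-2*θ)*N) - 4*c*Real.sqrt ((t+s-2*θ)*N))|
          ≤ (1/Real.sqrt N) * (ε₁*(Real.sqrt ((t-θ)*N) + Real.sqrt ((s-θ)*N)
              + Real.sqrt ((t+s-2*θ)*N)) + 3*C) := by
            apply mul_le_mul_of_nonneg_left habs (by positivity)
        _ = ε₁*(Real.sqrt (t-θ) + Real.sqrt (s-θ) + Real.sqrt (t+s-2*θ)) + 3*C/Real.sqrt N := by
            rw [s1, s2, s3]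
            field_simp
        _ ≤ ε₁*(3*Real.sqrt (t+s)) + 3*C/Real.sqrt N := by
            have hsq0 : 0 ≤ Real.sqrt (t-θ) := Real.sqrt_nonneg _
            nlinarith
        _ ≤ ε/(2*(s+1)) + ε/(2*(s+1)) := by
            have hb1 : ε₁*(3*Real.sqrt (t+s)) ≤ ε/(2*(s+1)) := by
              have hεM : ε₁ * M = ε/(2*(s+1)) := by
                rw [hε₁_def]
                field_simp
              have h3M : 3*Real.sqrt (t+s) ≤ M := by rw [hM_def]; linarith
              nlinarith
            have hb2 : 3*C/Real.sqrt N ≤ ε/(2*(s+1)) := by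
              have hKε : ε*K = 6*C*(s+1) + ε := by
                rw [hK_def]
                field_simp
              rw [div_le_div_iff₀ hsN0 (by positivity)]
              have h1 : ε*K ≤ ε*Real.sqrt N := mul_le_mul_of_nonneg_left hN hε.le
              nlinarith
            linarith
        _ = ε/(s+1) := by
            field_simp
            ring
    -- conclude
    have hI := intervalIntegral.norm_integral_le_of_norm_le_const
      (f := fun θ => g N θ - L θ) (a := (0:ℝ)) (b := s) (C := ε/(s+1)) hpt
    rw [intervalIntegral.integral_sub ((hgc N).intervalIntegrable _ _)
      (hLc.intervalIntegrable _ _)] at hI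
    rw [Real.dist_eq]
    have hfin : (ε/(s+1)) * |s - 0| < ε := by
      rw [sub_zero, abs_of_nonneg hs, div_mul_eq_mul_div, div_lt_iff₀ (by positivity)]
      nlinarith
    calc |(∫ θ in (0:ℝ)..s, g N θ) - ∫ θ in (0:ℝ)..s, L θ| ≤ (ε/(s+1)) * |s - 0| := hI
      _ < ε := hfin
  have hLval : (∫ θ in (0:ℝ)..s, L θ)
      = (1 / (3 * π ^ ((3:ℝ)/2))) * (s ^ ((3:ℝ)/2) + t ^ ((3:ℝ)/2)
          - (1/2) * (t - s) ^ ((3:ℝ)/2) - (1/2) * (t + s) ^ ((3:ℝ)/2)) := by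
    rw [← L_integral s t]
  rw [← hLval]
  exact Tendsto.congr (fun N => (heq N).symm) hmain
end

section
/- Suppose $q:(0,\infty)\to[0,\infty)$ satisfies $q(r) \leq K r^{-3/2}$ for all $r > 0$ and some constant $K$. Then for all $0 \leq s < t$ and $N \geq 1$, $\frac{1}{N^{3/2}} \int_{sN}^{tN} \int_{sN}^{\theta} \int_0^{\infty} q(\theta - r + v)\,dv\,dr\,d\theta \leq \frac{8K}{3}(t-s)^{3/2}$. -/
open Real MeasureTheory intervalIntegral
set_option maxHeartbeats 1000000

private lemma shift_Ioi_integral (c : ℝ) (f : ℝ → ℝ) :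
    ∫ v in Set.Ioi (0:ℝ), f (c + v) = ∫ x in Set.Ioi c, f x := by
  have h := (measurePreserving_add_left (volume : Measure ℝ) c).setIntegral_preimage_emb
    (MeasurableEquiv.addLeft c).measurableEmbedding f (Set.Ioi c)
  have hpre : (fun x => c + x) ⁻¹' Set.Ioi c = Set.Ioi 0 := by ext x; simp
  rw [← h, hpre]

private lemma shift_Ioi_integrable (c : ℝ) (f : ℝ → ℝ) (h : IntegrableOn f (Set.Ioi c)) :
    IntegrableOn (fun v => f (c + v)) (Set.Ioi (0:ℝ)) := by
  have h2 := ((measurePreserving_add_left (volume : Measure ℝ) c).integrableOn_comp_preimage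
    (MeasurableEquiv.addLeft c).measurableEmbedding).2 h
  have hpre : (fun x => c + x) ⁻¹' Set.Ioi c = Set.Ioi 0 := by ext x; simp
  rwa [hpre] at h2

private lemma inner_le (q : ℝ → ℝ) (K : ℝ)
    (hq0 : ∀ r > 0, 0 ≤ q r) (hq : ∀ r > 0, q r ≤ K * r ^ (-(3:ℝ)/2))
    (c : ℝ) (hc : 0 < c) :
    ∫ v in Set.Ioi (0:ℝ), q (c + v) ≤ 2 * K * c ^ (-(1:ℝ)/2) := by
  have hrpow : IntegrableOn (fun x : ℝ => K * x ^ (-(3:ℝ)/2)) (Set.Ioi c) :=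
    (integrableOn_Ioi_rpow_of_lt (by norm_num) hc).const_mul K
  have hgint : IntegrableOn (fun v => K * (c + v) ^ (-(3:ℝ)/2)) (Set.Ioi (0:ℝ)) :=
    shift_Ioi_integrable c (fun x : ℝ => K * x ^ (-(3:ℝ)/2)) hrpow
  have hmono : ∫ v in Set.Ioi (0:ℝ), q (c + v)
      ≤ ∫ v in Set.Ioi (0:ℝ), K * (c + v) ^ (-(3:ℝ)/2) := by
    apply integral_mono_of_nonneg
    · filter_upwards [ae_restrict_mem measurableSet_Ioi] with v hv
      exact hq0 _ (by simp only [Set.mem_Ioi] at hv; linarith)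
    · exact hgint
    · filter_upwards [ae_restrict_mem measurableSet_Ioi] with v hv
      exact hq _ (by simp only [Set.mem_Ioi] at hv; linarith)
  have hval : ∫ v in Set.Ioi (0:ℝ), K * (c + v) ^ (-(3:ℝ)/2) = 2 * K * c ^ (-(1:ℝ)/2) := by
    rw [shift_Ioi_integral c (fun x => K * x ^ (-(3:ℝ)/2)), MeasureTheory.integral_const_mul,
      integral_Ioi_rpow_of_lt (by norm_num) hc]
    rw [show (-(3:ℝ)/2 + 1) = -(1:ℝ)/2 by norm_num]
    ring
  linarith

theorem tightness_bound_d3 (q : ℝ → ℝ) (K : ℝ) (hmeas : Measurable q)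
    (hq0 : ∀ r > 0, 0 ≤ q r) (hq : ∀ r > 0, q r ≤ K * r ^ (-(3:ℝ)/2))
    (s t : ℝ) (hs : 0 ≤ s) (hst : s < t) (N : ℝ) (hN : 1 ≤ N) :
    (1 / N ^ ((3:ℝ)/2)) *
        ∫ θ in (s * N)..(t * N), ∫ r in (s * N)..θ, ∫ v in Set.Ioi (0:ℝ), q (θ - r + v)
      ≤ (8 * K / 3) * (t - s) ^ ((3:ℝ)/2) := by
  have hN0 : (0:ℝ) < N := lt_of_lt_of_le one_pos hN
  have hK : 0 ≤ K := by
    have h1 := hq0 1 one_pos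
    have h2 := hq 1 one_pos
    simpa using h1.trans h2
  set a := s * N with ha
  set b := t * N with hb
  have hab : a ≤ b := by
    apply mul_le_mul_of_nonneg_right hst.le hN0.le
  -- inner + middle bound: for θ ∈ [a, b], the middle integral ≤ 4K(θ-a)^(1/2)
  have middle : ∀ θ : ℝ, a ≤ θ →
      (∫ r in a..θ, ∫ v in Set.Ioi (0:ℝ), q (θ - r + v)) ≤ 4 * K * (θ - a) ^ ((1:ℝ)/2) := by
    intro θ hθ
    have hbnd_ii : IntervalIntegrable (fun r => 2 * K * (θ - r) ^ (-(1:ℝ)/2)) volume a θ := by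
      have h1 : IntervalIntegrable (fun x : ℝ => 2 * K * x ^ (-(1:ℝ)/2)) volume 0 (θ - a) :=
        (intervalIntegrable_rpow' (by norm_num)).const_mul (2 * K)
      simpa using (h1.comp_sub_left θ).symm
    have hbnd_int : IntegrableOn (fun r => 2 * K * (θ - r) ^ (-(1:ℝ)/2)) (Set.Ioc a θ) :=
      (intervalIntegrable_iff_integrableOn_Ioc_of_le hθ).1 hbnd_ii
    have step1 : (∫ r in a..θ, ∫ v in Set.Ioi (0:ℝ), q (θ - r + v))
        ≤ ∫ r in a..θ, 2 * K * (θ - r) ^ (-(1:ℝ)/2) := by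
      rw [intervalIntegral.integral_of_le hθ, intervalIntegral.integral_of_le hθ,
        setIntegral_congr_set (Ioo_ae_eq_Ioc (a := a) (b := θ)).symm,
        setIntegral_congr_set (Ioo_ae_eq_Ioc (a := a) (b := θ)).symm]
      apply integral_mono_of_nonneg
      · filter_upwards [ae_restrict_mem measurableSet_Ioo] with r hr
        apply MeasureTheory.integral_nonneg_of_ae
        filter_upwards [ae_restrict_mem measurableSet_Ioi] with v hv
        exact hq0 _ (by simp only [Set.mem_Ioo] at hr; simp only [Set.mem_Ioi] at hv; linarith)
      · exact hbnd_int.mono_set Set.Ioo_subset_Ioc_self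
      · filter_upwards [ae_restrict_mem measurableSet_Ioo] with r hr
        simp only [Set.mem_Ioo] at hr
        exact inner_le q K hq0 hq (θ - r) (by linarith)
    have step2 : (∫ r in a..θ, 2 * K * (θ - r) ^ (-(1:ℝ)/2)) = 4 * K * (θ - a) ^ ((1:ℝ)/2) := by
      have := intervalIntegral.integral_comp_sub_left
        (a := a) (b := θ) (fun x : ℝ => 2 * K * x ^ (-(1:ℝ)/2)) θ
      rw [this]
      simp only [sub_self]
      rw [intervalIntegral.integral_const_mul, integral_rpow (Or.inl (by norm_num))]
      rw [show (-(1:ℝ)/2 + 1) = (1:ℝ)/2 by norm_num, Real.zero_rpow (by norm_num)]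
      ring
    linarith
  -- nonnegativity of the middle integral
  have middle_nonneg : ∀ θ : ℝ, a ≤ θ →
      0 ≤ ∫ r in a..θ, ∫ v in Set.Ioi (0:ℝ), q (θ - r + v) := by
    intro θ hθ
    apply intervalIntegral.integral_nonneg hθ
    intro r hr
    apply MeasureTheory.integral_nonneg_of_ae
    filter_upwards [ae_restrict_mem measurableSet_Ioi] with v hv
    simp only [Set.mem_Icc] at hr; simp only [Set.mem_Ioi] at hv
    exact hq0 _ (by linarith)
  -- outer bound
  have hbnd3_ii : IntervalIntegrable (fun θ => 4 * K * (θ - a) ^ ((1:ℝ)/2)) volume a b := by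
    have h1 : IntervalIntegrable (fun x : ℝ => 4 * K * x ^ ((1:ℝ)/2)) volume 0 (b - a) :=
      (intervalIntegrable_rpow' (by norm_num)).const_mul (4 * K)
    simpa using h1.comp_sub_right a
  have outer : (∫ θ in a..b, ∫ r in a..θ, ∫ v in Set.Ioi (0:ℝ), q (θ - r + v))
      ≤ ∫ θ in a..b, 4 * K * (θ - a) ^ ((1:ℝ)/2) := by
    rw [intervalIntegral.integral_of_le hab, intervalIntegral.integral_of_le hab]
    apply integral_mono_of_nonneg
    · filter_upwards [ae_restrict_mem measurableSet_Ioc] with θ hθ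
      exact middle_nonneg θ hθ.1.le
    · exact (intervalIntegrable_iff_integrableOn_Ioc_of_le hab).1 hbnd3_ii
    · filter_upwards [ae_restrict_mem measurableSet_Ioc] with θ hθ
      exact middle θ hθ.1.le
  have outer_val : (∫ θ in a..b, 4 * K * (θ - a) ^ ((1:ℝ)/2))
      = (8 * K / 3) * (b - a) ^ ((3:ℝ)/2) := by
    have := intervalIntegral.integral_comp_sub_right
      (a := a) (b := b) (fun x : ℝ => 4 * K * x ^ ((1:ℝ)/2)) a
    rw [this]
    simp only [sub_self]
    rw [intervalIntegral.integral_const_mul, integral_rpow (Or.inl (by norm_num))]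
    rw [show ((1:ℝ)/2 + 1) = (3:ℝ)/2 by norm_num, Real.zero_rpow (by norm_num)]
    ring
  have hfin : (1 / N ^ ((3:ℝ)/2)) *
      (∫ θ in a..b, ∫ r in a..θ, ∫ v in Set.Ioi (0:ℝ), q (θ - r + v))
      ≤ (1 / N ^ ((3:ℝ)/2)) * ((8 * K / 3) * (b - a) ^ ((3:ℝ)/2)) := by
    apply mul_le_mul_of_nonneg_left _ (by positivity)
    rw [← outer_val]; exact outer
  calc (1 / N ^ ((3:ℝ)/2)) *
      ∫ θ in a..b, ∫ r in a..θ, ∫ v in Set.Ioi (0:ℝ), q (θ - r + v)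
      ≤ (1 / N ^ ((3:ℝ)/2)) * ((8 * K / 3) * (b - a) ^ ((3:ℝ)/2)) := hfin
    _ = (8 * K / 3) * (t - s) ^ ((3:ℝ)/2) := by
        have hba : b - a = (t - s) * N := by ring
        rw [hba, Real.mul_rpow (by linarith) hN0.le]
        field_simp
end

section
/- Suppose $q:(0,\infty)\to[0,\infty)$ is measurable with $\int_0^\infty q(v)\,dv \leq K_8$ and $q(v) \leq K_7 v^{-2}$ for all $v > 0$. Then for all $T > 0$, $N \geq \max\{4, T\}$, and $0 \leq s < t \leq T$: $\int_0^{(t-s)N} \int_0^\infty q(\theta + v)\,dv\,d\theta \leq (2K_7 + K_8)\log N$. -/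
open Real MeasureTheory

private lemma shift_eq (q : ℝ → ℝ) (hmeas : Measurable q) (θ : ℝ) :
    ∫ v in Set.Ioi (0:ℝ), q (θ + v) = ∫ u in Set.Ioi θ, q u := by
  have hmap : Measure.map (θ + ·) (volume : Measure ℝ) = volume :=
    map_add_left_eq_self volume θ
  conv_rhs => rw [← hmap]
  rw [setIntegral_map measurableSet_Ioi
    (by rw [hmap]; exact hmeas.aestronglyMeasurable)
    (measurable_const_add θ).aemeasurable]
  simp

theorem tightness_bound_d4 (q : ℝ → ℝ) (K7 K8 : ℝ) (hmeas : Measurable q)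
    (hq0 : ∀ v > 0, 0 ≤ q v) (hq7 : ∀ v > 0, q v ≤ K7 / v ^ 2)
    (hintgr : IntegrableOn q (Set.Ioi 0)) (hK8 : ∫ v in Set.Ioi (0:ℝ), q v ≤ K8)
    (T : ℝ) (hT : 0 < T) (N : ℝ) (hN : max 4 T ≤ N)
    (s t : ℝ) (hs : 0 ≤ s) (hst : s < t) (ht : t ≤ T) :
    ∫ θ in (0:ℝ)..((t - s) * N), ∫ v in Set.Ioi (0:ℝ), q (θ + v)
      ≤ (2 * K7 + K8) * Real.log N := by
  have hN4 : (4:ℝ) ≤ N := le_trans (le_max_left _ _) hN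
  have hNT : T ≤ N := le_trans (le_max_right _ _) hN
  have hN1 : (1:ℝ) ≤ N := by linarith
  have hlogN : (1:ℝ) ≤ Real.log N := by
    rw [Real.le_log_iff_exp_le (by linarith)]
    calc Real.exp 1 ≤ 2.7182818286 := (Real.exp_one_lt_d9).le
    _ ≤ N := by linarith
  have hK7 : 0 ≤ K7 := by
    have h1 := hq7 1 one_pos
    have h2 := hq0 1 one_pos
    nlinarith
  have hK8' : 0 ≤ K8 := le_trans (integral_nonneg_of_ae
    ((ae_restrict_iff' measurableSet_Ioi).2 (Filter.Eventually.of_forall hq0))) hK8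
  set F : ℝ → ℝ := fun θ => ∫ v in Set.Ioi (0:ℝ), q (θ + v) with hF
  -- integrability of q on Ioi θ for θ ≥ 0
  have hint : ∀ θ : ℝ, 0 ≤ θ → IntegrableOn q (Set.Ioi θ) :=
    fun θ hθ => hintgr.mono_set (Set.Ioi_subset_Ioi hθ)
  -- F θ ≤ K8 for θ ≥ 0
  have hFK8 : ∀ θ : ℝ, 0 ≤ θ → F θ ≤ K8 := by
    intro θ hθ
    rw [show F θ = ∫ u in Set.Ioi θ, q u from shift_eq q hmeas θ]
    refine le_trans (setIntegral_mono_set hintgr ?_ (Filter.Eventually.of_forall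
      (Set.Ioi_subset_Ioi hθ))) hK8
    exact (ae_restrict_iff' measurableSet_Ioi).2 (Filter.Eventually.of_forall hq0)
  -- F θ ≤ K7 / θ for θ > 0
  have hFK7 : ∀ θ : ℝ, 0 < θ → F θ ≤ K7 / θ := by
    intro θ hθ
    rw [show F θ = ∫ u in Set.Ioi θ, q u from shift_eq q hmeas θ]
    have hrint : IntegrableOn (fun v : ℝ => K7 * v ^ (-2:ℝ)) (Set.Ioi θ) :=
      (integrableOn_Ioi_rpow_of_lt (by norm_num) hθ).const_mul K7
    have hle : ∫ u in Set.Ioi θ, q u ≤ ∫ v in Set.Ioi θ, K7 * v ^ (-2:ℝ) := by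
      refine setIntegral_mono_on (hint θ hθ.le) hrint measurableSet_Ioi ?_
      intro x hx
      have hx0 : 0 < x := lt_trans hθ hx
      calc q x ≤ K7 / x ^ 2 := hq7 x hx0
        _ = K7 * x ^ (-2:ℝ) := by
            rw [Real.rpow_neg hx0.le, show ((2:ℝ)) = ((2:ℕ):ℝ) by norm_num,
              Real.rpow_natCast, div_eq_mul_inv]
    calc ∫ u in Set.Ioi θ, q u ≤ ∫ v in Set.Ioi θ, K7 * v ^ (-2:ℝ) := hle
      _ = K7 * ∫ v in Set.Ioi θ, v ^ (-2:ℝ) := by rw [integral_const_mul]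
      _ = K7 * (-θ ^ ((-2:ℝ) + 1) / ((-2:ℝ) + 1)) := by
          rw [integral_Ioi_rpow_of_lt (by norm_num) hθ]
      _ = K7 / θ := by
          norm_num [Real.rpow_neg_one, div_eq_mul_inv]
  have hanti : AntitoneOn F (Set.Ici (0:ℝ)) := by
    intro a ha b hb hab
    rw [show F a = ∫ u in Set.Ioi a, q u from shift_eq q hmeas a,
      show F b = ∫ u in Set.Ioi b, q u from shift_eq q hmeas b]
    refine setIntegral_mono_set (hint a ha) ?_ (Filter.Eventually.of_forall
      (Set.Ioi_subset_Ioi hab))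
    exact (ae_restrict_iff' measurableSet_Ioi).2 (Filter.Eventually.of_forall
      (fun x hx => hq0 x (lt_of_le_of_lt ha hx)))
  set M : ℝ := (t - s) * N with hMdef
  have hM : 0 < M := mul_pos (by linarith) (by linarith)
  have hMN : M ≤ N * N := by
    have : t - s ≤ N := by linarith
    have hN0 : (0:ℝ) < N := by linarith
    calc M = (t - s) * N := rfl
      _ ≤ N * N := by nlinarith
  have hintF : ∀ a b : ℝ, 0 ≤ a → a ≤ b → IntervalIntegrable F volume a b := by
    intro a b ha hab
    refine (hanti.mono ?_).intervalIntegrable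
    rw [Set.uIcc_of_le hab]
    exact fun x hx => le_trans ha hx.1
  have hK8logN : K8 ≤ K8 * Real.log N := le_mul_of_one_le_right hK8' hlogN
  rcases le_or_gt M 1 with hM1 | hM1
  · calc ∫ θ in (0:ℝ)..M, F θ ≤ ∫ θ in (0:ℝ)..M, K8 := by
          refine intervalIntegral.integral_mono_on hM.le (hintF 0 M le_rfl hM.le)
            intervalIntegrable_const (fun x hx => hFK8 x hx.1)
      _ = M * K8 := by simp [mul_comm]
      _ ≤ K8 := by nlinarith
      _ ≤ (2 * K7 + K8) * Real.log N := by nlinarith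
  · have hsplit : ∫ θ in (0:ℝ)..M, F θ
        = (∫ θ in (0:ℝ)..1, F θ) + ∫ θ in (1:ℝ)..M, F θ :=
      (intervalIntegral.integral_add_adjacent_intervals
        (hintF 0 1 le_rfl one_pos.le) (hintF 1 M one_pos.le hM1.le)).symm
    have h1 : ∫ θ in (0:ℝ)..1, F θ ≤ K8 := by
      calc ∫ θ in (0:ℝ)..1, F θ ≤ ∫ θ in (0:ℝ)..1, K8 := by
            refine intervalIntegral.integral_mono_on one_pos.le
              (hintF 0 1 le_rfl one_pos.le) intervalIntegrable_const
              (fun x hx => hFK8 x hx.1)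
        _ = K8 := by simp
    have hcont : ContinuousOn (fun θ : ℝ => K7 / θ) (Set.uIcc 1 M) := by
      refine ContinuousOn.div continuousOn_const continuousOn_id ?_
      intro x hx
      rw [Set.uIcc_of_le hM1.le] at hx
      exact ne_of_gt (lt_of_lt_of_le one_pos hx.1)
    have h2 : ∫ θ in (1:ℝ)..M, F θ ≤ K7 * Real.log M := by
      have hnz : (0:ℝ) ∉ Set.uIcc 1 M := by
        rw [Set.uIcc_of_le hM1.le]
        intro h
        exact absurd h.1 (by norm_num)
      calc ∫ θ in (1:ℝ)..M, F θ ≤ ∫ θ in (1:ℝ)..M, K7 / θ := by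
            refine intervalIntegral.integral_mono_on hM1.le
              (hintF 1 M one_pos.le hM1.le) (hcont.intervalIntegrable)
              (fun x hx => hFK7 x (lt_of_lt_of_le one_pos hx.1))
        _ = K7 * Real.log M := by
            simp_rw [div_eq_mul_inv, intervalIntegral.integral_const_mul,
              integral_inv hnz, div_one]
    have hlogM : Real.log M ≤ 2 * Real.log N := by
      calc Real.log M ≤ Real.log (N * N) := Real.log_le_log hM hMN
        _ = Real.log N + Real.log N := Real.log_mul (by linarith) (by linarith)
        _ = 2 * Real.log N := by ring
    calc ∫ θ in (0:ℝ)..M, F θ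
        = (∫ θ in (0:ℝ)..1, F θ) + ∫ θ in (1:ℝ)..M, F θ := hsplit
      _ ≤ K8 + K7 * Real.log M := add_le_add h1 h2
      _ ≤ K8 + K7 * (2 * Real.log N) := by nlinarith
      _ ≤ (2 * K7 + K8) * Real.log N := by nlinarith
end
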